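/- Let A be a unital commutative real algebra, L : A → ℝ linear positive semidefinite with L(1) = 1, C > 0 a constant and v : A → [0,∞) a function satisfying v(1) = 1 and v(a²) ≤ v(a)² for all a, such that |L(a)| ≤ C·v(a) for all a ∈ A. Then C_a := sup_{n≥1}(L(a^{2n}))^{1/(2n)} ≤ v(a) for every a ∈ A. -/

import Mathlib

lemma cs_aux {A : Type*} [CommRing A] [Algebra ℝ A] (L : A →ₗ[ℝ] ℝ)
    (hpsd : ∀ x : A, 0 ≤ L (x ^ 2)) (x y : A) :
    (L (x * y)) ^ 2 ≤ L (x ^ 2) * L (y ^ 2) := by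
  have key : ∀ r : ℝ, 0 ≤ L (y ^ 2) * (r * r) + (2 * L (x * y)) * r + L (x ^ 2) := by
    intro r
    have h1 : (r • y + x) ^ 2 = (r * r) • y ^ 2 + ((2 * r) • (x * y) + x ^ 2) := by
      simp only [Algebra.smul_def, map_mul, map_ofNat]
      ring
    have h2 := hpsd (r • y + x)
    rw [h1, map_add, map_add, map_smul, map_smul] at h2
    simp only [smul_eq_mul] at h2
    linarith [h2]
  have hd := discrim_le_zero key
  rw [discrim] at hd
  nlinarith [hd]

lemma step_pow (t : ℕ → ℝ) (h0 : t 0 = 1) (hnn : ∀ n, 0 ≤ t n)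
    (hlc : ∀ n, t (n + 1) ^ 2 ≤ t n * t (n + 2)) :
    ∀ n, t n ^ (n + 1) ≤ t (n + 1) ^ n := by
  intro n
  induction n with
  | zero => simp [h0]
  | succ n ih =>
    rcases eq_or_lt_of_le (hnn (n + 1)) with h | h
    · rw [← h]
      simpa using pow_nonneg (hnn (n + 2)) (n + 1)
    · have h2 : t (n + 1) ^ (2 * (n + 1)) ≤ t (n + 1) ^ n * t (n + 2) ^ (n + 1) := by
        calc t (n + 1) ^ (2 * (n + 1)) = (t (n + 1) ^ 2) ^ (n + 1) := by rw [← pow_mul]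
          _ ≤ (t n * t (n + 2)) ^ (n + 1) := by
              exact pow_le_pow_left₀ (sq_nonneg _) (hlc n) _
          _ = t n ^ (n + 1) * t (n + 2) ^ (n + 1) := mul_pow _ _ _
          _ ≤ t (n + 1) ^ n * t (n + 2) ^ (n + 1) := by
              exact mul_le_mul_of_nonneg_right ih (pow_nonneg (hnn _) _)
      have h3 : t (n + 1) ^ n * t (n + 1) ^ (n + 2) = t (n + 1) ^ (2 * (n + 1)) := by
        rw [← pow_add]; ring_nf
      have h4 : t (n + 1) ^ n * t (n + 1) ^ (n + 2) ≤ t (n + 1) ^ n * t (n + 2) ^ (n + 1) := by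
        rw [h3]; exact h2
      exact le_of_mul_le_mul_left h4 (pow_pos h _)

lemma step_rpow (t : ℕ → ℝ) (h0 : t 0 = 1) (hnn : ∀ n, 0 ≤ t n)
    (hlc : ∀ n, t (n + 1) ^ 2 ≤ t n * t (n + 2)) (n : ℕ) (hn : 1 ≤ n) :
    t n ^ ((n : ℝ))⁻¹ ≤ t (n + 1) ^ (((n + 1 : ℕ) : ℝ))⁻¹ := by
  have key := step_pow t h0 hnn hlc n
  have hnz : (n : ℝ) ≠ 0 := Nat.cast_ne_zero.mpr (by omega)
  have hnz1 : ((n : ℝ) + 1) ≠ 0 := by positivity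
  have e := Real.rpow_le_rpow (pow_nonneg (hnn n) _) key
    (by positivity : (0:ℝ) ≤ ((n : ℝ) * ((n : ℝ) + 1))⁻¹)
  rw [← Real.rpow_natCast (t n) (n + 1), ← Real.rpow_natCast (t (n + 1)) n,
    ← Real.rpow_mul (hnn n), ← Real.rpow_mul (hnn (n + 1))] at e
  push_cast at e ⊢
  have h1 : ((n : ℝ) + 1) * ((n : ℝ) * ((n : ℝ) + 1))⁻¹ = ((n : ℝ))⁻¹ := by
    rw [mul_inv, mul_comm ((n : ℝ))⁻¹, ← mul_assoc, mul_inv_cancel₀ hnz1, one_mul]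
  have h2 : (n : ℝ) * ((n : ℝ) * ((n : ℝ) + 1))⁻¹ = ((n : ℝ) + 1)⁻¹ := by
    rw [mul_inv, ← mul_assoc, mul_inv_cancel₀ hnz, one_mul]
  rw [h1, h2] at e
  exact e

lemma mono_rpow (t : ℕ → ℝ) (h0 : t 0 = 1) (hnn : ∀ n, 0 ≤ t n)
    (hlc : ∀ n, t (n + 1) ^ 2 ≤ t n * t (n + 2)) (n m : ℕ) (hn : 1 ≤ n) (hm : n ≤ m) :
    t n ^ ((n : ℝ))⁻¹ ≤ t m ^ ((m : ℝ))⁻¹ := by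
  induction m with
  | zero => omega
  | succ m ih =>
    rcases Nat.lt_or_ge m n with h | h
    · have hnm : n = m + 1 := by omega
      subst hnm
      exact le_rfl
    · exact le_trans (ih h) (step_rpow t h0 hnn hlc m (by omega))

/-- The set of values `(L(a^{2n}))^{1/(2n)}`, `n ≥ 1`. -/
def Cset {A : Type*} [CommRing A] [Algebra ℝ A] (L : A →ₗ[ℝ] ℝ) (a : A) : Set ℝ :=
  {x : ℝ | ∃ n : ℕ, 1 ≤ n ∧ x = (L (a ^ (2 * n))) ^ (((2 * n : ℕ) : ℝ))⁻¹}

theorem stmt_13 {A : Type*} [CommRing A] [Algebra ℝ A]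
    (L : A →ₗ[ℝ] ℝ) (hpsd : ∀ x : A, 0 ≤ L (x ^ 2)) (hone : L 1 = 1)
    (C : ℝ) (hC : 0 < C) (v : A → ℝ) (hv0 : ∀ a : A, 0 ≤ v a)
    (hv1 : v 1 = 1) (hvsq : ∀ a : A, v (a ^ 2) ≤ (v a) ^ 2)
    (hbound : ∀ a : A, |L a| ≤ C * v a) :
    ∀ a : A, sSup (Cset L a) ≤ v a := by
  intro a
  apply Real.sSup_le _ (hv0 a)
  rintro x ⟨n, hn, rfl⟩
  set t : ℕ → ℝ := fun k => L (a ^ (2 * k)) with ht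
  have ht0 : t 0 = 1 := by simp [ht, hone]
  have htnn : ∀ k, 0 ≤ t k := by
    intro k
    have h := hpsd (a ^ k)
    rw [← pow_mul, mul_comm k 2] at h
    exact h
  have hlc : ∀ k, t (k + 1) ^ 2 ≤ t k * t (k + 2) := by
    intro k
    have h := cs_aux L hpsd (a ^ k) (a ^ (k + 2))
    rw [← pow_add, ← pow_mul, ← pow_mul] at h
    have e1 : k + (k + 2) = 2 * (k + 1) := by ring
    have e2 : k * 2 = 2 * k := by ring
    have e3 : (k + 2) * 2 = 2 * (k + 2) := by ring
    rw [e1, e2, e3] at h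
    exact h
  -- v(a^(2^k)) ≤ v(a)^(2^k)
  have hvpow : ∀ k : ℕ, v (a ^ 2 ^ k) ≤ v a ^ 2 ^ k := by
    intro k
    induction k with
    | zero => simp
    | succ k ih =>
      have h1 : a ^ 2 ^ (k + 1) = (a ^ 2 ^ k) ^ 2 := by
        rw [← pow_mul, pow_succ]
      rw [h1]
      calc v ((a ^ 2 ^ k) ^ 2) ≤ v (a ^ 2 ^ k) ^ 2 := hvsq _
        _ ≤ (v a ^ 2 ^ k) ^ 2 := pow_le_pow_left₀ (hv0 _) ih 2
        _ = v a ^ 2 ^ (k + 1) := by rw [← pow_mul, pow_succ]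
  -- bound at powers of two
  have ht2 : ∀ d : ℕ, t (2 ^ d) ≤ C * v a ^ 2 ^ (d + 1) := by
    intro d
    have h1 : (2 : ℕ) * 2 ^ d = 2 ^ (d + 1) := by rw [pow_succ]; ring
    calc t (2 ^ d) ≤ |L (a ^ (2 * 2 ^ d))| := le_abs_self _
      _ ≤ C * v (a ^ (2 * 2 ^ d)) := hbound _
      _ = C * v (a ^ 2 ^ (d + 1)) := by rw [h1]
      _ ≤ C * v a ^ 2 ^ (d + 1) := by
          have := hvpow (d + 1); nlinarith [this]
  -- monotonicity with exponent (2m)⁻¹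
  have claim1 : ∀ m : ℕ, 1 ≤ m → n ≤ m →
      t n ^ (((2 * n : ℕ) : ℝ))⁻¹ ≤ t m ^ (((2 * m : ℕ) : ℝ))⁻¹ := by
    intro m hm1 hnm
    have h := mono_rpow t ht0 htnn hlc n m hn hnm
    have h2 := Real.rpow_le_rpow (Real.rpow_nonneg (htnn n) _) h
      (by norm_num : (0:ℝ) ≤ (2:ℝ)⁻¹)
    rw [← Real.rpow_mul (htnn n), ← Real.rpow_mul (htnn m)] at h2
    have e1 : ((n : ℝ))⁻¹ * (2:ℝ)⁻¹ = (((2 * n : ℕ) : ℝ))⁻¹ := by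
      push_cast; rw [mul_inv]; ring
    have e2 : ((m : ℝ))⁻¹ * (2:ℝ)⁻¹ = (((2 * m : ℕ) : ℝ))⁻¹ := by
      push_cast; rw [mul_inv]; ring
    rw [e1, e2] at h2
    exact h2
  -- bound at powers of two with exponent
  have claim2 : ∀ d : ℕ, t (2 ^ d) ^ (((2 * 2 ^ d : ℕ) : ℝ))⁻¹ ≤
      C ^ (((2 * 2 ^ d : ℕ) : ℝ))⁻¹ * v a := by
    intro d
    have hne : (((2 * 2 ^ d : ℕ) : ℝ)) ≠ 0 := by positivity
    have h := Real.rpow_le_rpow (htnn _) (ht2 d) (by positivity : (0:ℝ) ≤ (((2 * 2 ^ d : ℕ) : ℝ))⁻¹)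
    rw [Real.mul_rpow hC.le (pow_nonneg (hv0 a) _)] at h
    have e1 : (v a ^ 2 ^ (d + 1)) ^ (((2 * 2 ^ d : ℕ) : ℝ))⁻¹ = v a := by
      rw [← Real.rpow_natCast (v a) (2 ^ (d + 1)), ← Real.rpow_mul (hv0 a)]
      have : ((2 ^ (d + 1) : ℕ) : ℝ) = ((2 * 2 ^ d : ℕ) : ℝ) := by
        congr 1; rw [pow_succ]; ring
      rw [this, mul_inv_cancel₀ hne, Real.rpow_one]
    rw [e1] at h
    exact h
  -- limit
  have htend : Filter.Tendsto (fun d : ℕ => C ^ (((2 * 2 ^ d : ℕ) : ℝ))⁻¹ * v a)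
      Filter.atTop (nhds (1 * v a)) := by
    apply Filter.Tendsto.mul_const
    have h1 : Filter.Tendsto (fun d : ℕ => (((2 * 2 ^ d : ℕ) : ℝ))⁻¹) Filter.atTop (nhds 0) := by
      apply Filter.Tendsto.comp tendsto_inv_atTop_zero
      have : Filter.Tendsto (fun d : ℕ => ((2 : ℝ) * 2 ^ d)) Filter.atTop Filter.atTop := by
        apply Filter.Tendsto.const_mul_atTop (by norm_num : (0:ℝ) < 2)
        exact tendsto_pow_atTop_atTop_of_one_lt (by norm_num)
      simpa [push_cast] using this
    have h2 : C ^ (0:ℝ) = 1 := Real.rpow_zero C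
    rw [← h2]
    exact (Real.continuousAt_const_rpow hC.ne').tendsto.comp h1
  rw [one_mul] at htend
  apply ge_of_tendsto htend
  filter_upwards [Filter.eventually_ge_atTop n] with d hd
  have hn2 : n ≤ 2 ^ d := le_trans hd (Nat.le_of_lt (Nat.lt_two_pow_self (n := d)))
  exact le_trans (claim1 (2 ^ d) Nat.one_le_two_pow hn2) (claim2 d)
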